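/- Assume that S x = 0 and x ∈ V imply x = 0. Then for every R > 0 the operator S + R·(id − P) is invertible, the operator on V obtained by restricting P∘(id + R⁻¹·S)⁻¹∘S∘P to V is invertible, and for every L ∈ H the solution r_R = (S + R·(id − P))⁻¹ L satisfies: P r_R is the unique element v ∈ V such that P((id + R⁻¹·S)⁻¹(S v)) = P((id + R⁻¹·S)⁻¹ L) (equation (17), the large-R representation of the additive part of the penalized estimator). -/

import Mathlib

open scoped RealInnerProductSpace

/-- equation (17), large-`R` representation of the additive part:
assume `S x = 0` and `x ∈ V` imply `x = 0`.  Then for every `R > 0` the operator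
`S + R·(id − P)` is invertible, the operator on `V` obtained by restricting
`P∘(id + R⁻¹·S)⁻¹∘S∘P` to `V` is invertible, and for every `L ∈ H` the solution
`r_R = (S + R·(id − P))⁻¹ L` satisfies: `P r_R` is the unique `v ∈ V` such that
`P((id + R⁻¹·S)⁻¹(S v)) = P((id + R⁻¹·S)⁻¹ L)`. -/
theorem equation17_additive_part
    {H : Type*} [NormedAddCommGroup H] [InnerProductSpace ℝ H] [FiniteDimensional ℝ H]
    (S : Module.End ℝ H)
    (hS_sym : ∀ x y : H, ⟪S x, y⟫ = ⟪x, S y⟫)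
    (hS_psd : ∀ x : H, 0 ≤ ⟪x, S x⟫)
    (V : Submodule ℝ H)
    (P : Module.End ℝ H) (hP : ∀ x : H, P x = (V.orthogonalProjectionOnto x : H))
    (hker : ∀ x : H, S x = 0 → x ∈ V → x = 0) :
    ∀ R : ℝ, 0 < R →
      IsUnit (S + R • (1 - P)) ∧
      IsUnit ((1 : Module.End ℝ H) + R⁻¹ • S) ∧
      (∀ w ∈ V, ∃! v : H, v ∈ V ∧
        P (Ring.inverse ((1 : Module.End ℝ H) + R⁻¹ • S) (S v)) = w) ∧
      ∀ L : H, ∀ v : H,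
        (v ∈ V ∧
            P (Ring.inverse ((1 : Module.End ℝ H) + R⁻¹ • S) (S v)) =
              P (Ring.inverse ((1 : Module.End ℝ H) + R⁻¹ • S) L)) ↔
          v = P (Ring.inverse (S + R • (1 - P)) L) := by
  intro R hR
  -- basic facts about P
  have hPmem : ∀ x : H, P x ∈ V := fun x => by
    rw [hP]; exact (V.orthogonalProjectionOnto x).2
  have hPid : ∀ x ∈ V, P x = x := fun x hx => by
    rw [hP]; exact Submodule.starProjection_eq_self_iff.2 hx
  have hPzero : ∀ x : H, P x = 0 ↔ x ∈ Vᗮ := fun x => by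
    rw [hP]
    constructor
    · intro h
      have : V.orthogonalProjectionOnto x = 0 := Subtype.ext (by simpa using h)
      exact Submodule.orthogonalProjectionOnto_eq_zero_iff.1 this
    · intro h; rw [Submodule.orthogonalProjectionOnto_eq_zero_iff.2 h]; rfl
  -- if ⟪x, S x⟫ = 0 then S x = 0
  have hSzero : ∀ x : H, ⟪x, S x⟫ = 0 → S x = 0 := by
    intro x hx
    by_contra hne
    have ha : (0:ℝ) < ‖S x‖^2 := pow_pos (norm_pos_iff.2 hne) 2
    have hc : (0:ℝ) ≤ ⟪S x, S (S x)⟫ := hS_psd (S x)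
    set c : ℝ := ⟪S x, S (S x)⟫ with hcdef
    have hcp : (0:ℝ) < c + 1 := by linarith
    set ε : ℝ := ‖S x‖^2 / (c + 1) with hεdef
    have hεpos : 0 < ε := div_pos ha hcp
    have key : (0:ℝ) ≤ ⟪x - ε • S x, S (x - ε • S x)⟫ := hS_psd _
    have hexp : ⟪x - ε • S x, S (x - ε • S x)⟫
        = -2 * ε * ‖S x‖^2 + ε^2 * c := by
      have h1 : ⟪x, S (S x)⟫ = ⟪S x, S x⟫ := (hS_sym x (S x)).symm
      simp only [map_sub, map_smul, inner_sub_left, inner_sub_right,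
        inner_smul_left, inner_smul_right, real_inner_self_eq_norm_sq,
        starRingEnd_apply, star_trivial]
      rw [hx, h1, real_inner_self_eq_norm_sq]
      ring
    rw [hexp] at key
    have heq : ε * (c + 1) = ‖S x‖^2 := by
      rw [hεdef]; field_simp
    have heq2 : ε * ‖S x‖^2 = ε * ε * (c + 1) := by rw [← heq]; ring
    have hεε : 0 < ε * ε := mul_pos hεpos hεpos
    nlinarith [key, heq2, hεε, mul_pos hεε (show (0:ℝ) < c + 2 by linarith)]
  -- injectivity of A := S + R • (1 - P)
  set A : Module.End ℝ H := S + R • (1 - P) with hAdef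
  have hAapp : ∀ x : H, A x = S x + R • (x - P x) := by
    intro x
    simp [hAdef, LinearMap.add_apply, LinearMap.smul_apply, LinearMap.sub_apply]
  have hAinj : ∀ x : H, A x = 0 → x = 0 := by
    intro x hxA
    rw [hAapp] at hxA
    have hsub : x - P x ∈ Vᗮ := by
      rw [hP]; exact Submodule.sub_starProjection_mem_orthogonal x
    have hinner : ⟪x, x - P x⟫ = ‖x - P x‖^2 := by
      have : ⟪P x, x - P x⟫ = 0 :=
        Submodule.inner_right_of_mem_orthogonal (hPmem x) hsub
      have hdecomp : P x + (x - P x) = x := by abel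
      calc ⟪x, x - P x⟫ = ⟪P x + (x - P x), x - P x⟫ := by rw [hdecomp]
        _ = ⟪P x, x - P x⟫ + ⟪x - P x, x - P x⟫ := inner_add_left _ _ _
        _ = ‖x - P x‖^2 := by rw [this, real_inner_self_eq_norm_sq]; ring
    have h0 : ⟪x, S x⟫ + R * ‖x - P x‖^2 = 0 := by
      have := congrArg (fun y => ⟪x, y⟫) hxA
      simpa [inner_add_right, inner_smul_right, hinner] using this
    have h1 : (0:ℝ) ≤ R * ‖x - P x‖^2 := by positivity
    have h2 : ⟪x, S x⟫ = 0 := le_antisymm (by linarith [hS_psd x]) (hS_psd x)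
    have h3 : R * ‖x - P x‖^2 = 0 := by linarith
    have h4 : x - P x = 0 := by
      have : ‖x - P x‖^2 = 0 := by
        rcases mul_eq_zero.1 h3 with h | h
        · exact absurd h (ne_of_gt hR)
        · exact h
      have := pow_eq_zero_iff (n := 2) (by norm_num) |>.1 this
      exact norm_eq_zero.1 this
    have hxV : x ∈ V := by
      rw [sub_eq_zero] at h4; rw [h4]; exact hPmem x
    exact hker x (hSzero x h2) hxV
  have hAunit : IsUnit A := by
    rw [LinearMap.isUnit_iff_ker_eq_bot]
    exact LinearMap.ker_eq_bot'.2 fun m hm => hAinj m hm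
  -- invertibility of T := 1 + R⁻¹ • S
  set T : Module.End ℝ H := 1 + R⁻¹ • S with hTdef
  have hTapp : ∀ x : H, T x = x + R⁻¹ • S x := by
    intro x; simp [hTdef]
  have hTunit : IsUnit T := by
    rw [LinearMap.isUnit_iff_ker_eq_bot]
    refine LinearMap.ker_eq_bot'.2 fun x hx => ?_
    rw [hTapp] at hx
    have h0 : ⟪x, x⟫ + R⁻¹ * ⟪x, S x⟫ = 0 := by
      have := congrArg (fun y => ⟪x, y⟫) hx
      simpa [inner_add_right, inner_smul_right] using this
    have h1 : (0:ℝ) ≤ R⁻¹ * ⟪x, S x⟫ :=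
      mul_nonneg (by positivity) (hS_psd x)
    have h2 : ⟪x, x⟫ = 0 := le_antisymm (by linarith [real_inner_self_nonneg (x := x)])
      real_inner_self_nonneg
    exact inner_self_eq_zero.1 h2
  refine ⟨hAunit, hTunit, ?_⟩
  -- inverse facts
  set t : Module.End ℝ H := Ring.inverse T with htdef
  set a : Module.End ℝ H := Ring.inverse A with hadef
  have hTt : ∀ x : H, T (t x) = x := by
    intro x
    have : T * t = 1 := Ring.mul_inverse_cancel T hTunit
    calc T (t x) = (T * t) x := rfl
      _ = x := by rw [this]; rfl
  have htT : ∀ x : H, t (T x) = x := by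
    intro x
    have : t * T = 1 := Ring.inverse_mul_cancel T hTunit
    calc t (T x) = (t * T) x := rfl
      _ = x := by rw [this]; rfl
  have hAa : ∀ x : H, A (a x) = x := by
    intro x
    have : A * a = 1 := Ring.mul_inverse_cancel A hAunit
    calc A (a x) = (A * a) x := rfl
      _ = x := by rw [this]; rfl
  -- forward identity: for any L, v := P (a L) satisfies P (t (S v)) = P (t L)
  have hforward : ∀ L : H, P (t (S (P (a L)))) = P (t L) := by
    intro L
    set r : H := a L with hrdef
    set q : H := r - P r with hqdef
    have hPq : P q = 0 := by
      have : P (P r) = P r := hPid _ (hPmem r)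
      simp [hqdef, map_sub, this]
    have hL : S (P r) + R • (T q) = L := by
      have hAr : S r + R • (r - P r) = L := by rw [← hAapp]; exact hAa L
      rw [hTapp]
      have hRR : R • (R⁻¹ • S q) = S q := by
        rw [smul_smul, mul_inv_cancel₀ (ne_of_gt hR), one_smul]
      rw [smul_add, hRR]
      have : S (P r) + S q = S r := by
        rw [hqdef, map_sub]; abel
      calc S (P r) + (R • q + S q) = (S (P r) + S q) + R • q := by abel
        _ = S r + R • (r - P r) := by rw [this, hqdef]
        _ = L := hAr
    have htL : t L = t (S (P r)) + R • q := by
      rw [← hL, map_add, map_smul, htT]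
    rw [htL, map_add, map_smul, hPq, smul_zero, add_zero]
  -- injectivity on V of v ↦ P (t (S v))
  have hinj : ∀ v : H, v ∈ V → P (t (S v)) = 0 → v = 0 := by
    intro v hv h0
    set u : H := t (S v) with hudef
    have huC : u ∈ Vᗮ := (hPzero u).1 h0
    have hSv : S v = u + R⁻¹ • S u := by rw [← hTapp]; exact (hTt (S v)).symm
    set x : H := v - R⁻¹ • u with hxdef
    have hPx : P x = v := by
      rw [hxdef, map_sub, map_smul, (hPzero u).2 huC, smul_zero, sub_zero, hPid v hv]
    have hAx : A x = 0 := by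
      rw [hAapp, hPx]
      have hSx : S x = u := by
        rw [hxdef, map_sub, map_smul, hSv]; abel
      rw [hSx, hxdef]
      have h5 : v - R⁻¹ • u - v = -(R⁻¹ • u) := by abel
      rw [h5, smul_neg, smul_smul, mul_inv_cancel₀ (ne_of_gt hR), one_smul]
      abel
    have hx0 : x = 0 := hAinj x hAx
    have hvu : v = R⁻¹ • u := by
      rw [hxdef, sub_eq_zero] at hx0; exact hx0
    have hvo : ⟪v, u⟫ = 0 := Submodule.inner_right_of_mem_orthogonal hv huC
    have : ⟪v, v⟫ = 0 := by
      nth_rewrite 2 [hvu]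
      rw [real_inner_smul_right, hvo, mul_zero]
    exact inner_self_eq_zero.1 this
  have huniq : ∀ v₁ v₂ : H, v₁ ∈ V → v₂ ∈ V →
      P (t (S v₁)) = P (t (S v₂)) → v₁ = v₂ := by
    intro v₁ v₂ h1 h2 he
    have : P (t (S (v₁ - v₂))) = 0 := by
      simp [map_sub, he]
    have := hinj (v₁ - v₂) (V.sub_mem h1 h2) this
    exact sub_eq_zero.1 this
  constructor
  · -- existence and uniqueness for each w ∈ V
    intro w hw
    refine ⟨P (a (T w)), ⟨hPmem _, ?_⟩, ?_⟩
    · rw [hforward (T w), htT, hPid w hw]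
    · rintro v ⟨hv, hveq⟩
      refine huniq v _ hv (hPmem _) ?_
      rw [hforward (T w), htT, hPid w hw, hveq]
  · intro L v
    constructor
    · rintro ⟨hv, hveq⟩
      exact huniq v (P (a L)) hv (hPmem _) (by rw [hveq, hforward L])
    · rintro rfl
      exact ⟨hPmem _, hforward L⟩
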